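/- The parity set PARITY_n = {x ∈ {0,1}^n : Σᵢ xᵢ is odd} satisfies: conv(PARITY_n) = {x ∈ [0,1]^n : for every S ⊆ [n] with |S| even, Σ_{i∈S}(1-xᵢ) + Σ_{i∉S} xᵢ ≥ 1}. -/

import Mathlib

open Finset

/-- Every odd-weight 0/1 vector satisfies all the parity inequalities. -/
private lemma parity_V_subset_Q {n : ℕ} :
    {x : Fin n → ℝ | (∀ i, x i = 0 ∨ x i = 1) ∧ Odd ({i | x i = 1}.ncard)} ⊆
      {x : Fin n → ℝ | (∀ i, 0 ≤ x i ∧ x i ≤ 1) ∧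
        ∀ S : Finset (Fin n), Even S.card →
          1 ≤ ∑ i ∈ S, (1 - x i) + ∑ i ∈ Sᶜ, x i} := by
  classical
  rintro v ⟨hv01, hvodd⟩
  have hT : {i | v i = 1} = ↑(univ.filter fun i => v i = 1) := by
    ext i; simp
  have hcard : ({i | v i = 1}).ncard = (univ.filter fun i => v i = 1).card := by
    rw [hT, Set.ncard_coe_finset]
  refine ⟨fun i => ?_, fun S hS => ?_⟩
  · rcases hv01 i with h | h <;> simp [h]
  · set f : Fin n → ℝ := fun i => if i ∈ S then 1 - v i else v i with hf
    have hs1 : ∑ i ∈ S, (1 - v i) = ∑ i ∈ S, f i :=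
      Finset.sum_congr rfl (fun i hi => by simp [hf, hi])
    have hs2 : ∑ i ∈ Sᶜ, v i = ∑ i ∈ Sᶜ, f i :=
      Finset.sum_congr rfl (fun i hi => by
        have hiS : i ∉ S := by simpa using hi
        simp [hf, hiS])
    have hsum : ∑ i ∈ S, (1 - v i) + ∑ i ∈ Sᶜ, v i = ∑ i, f i := by
      rw [hs1, hs2, Finset.sum_add_sum_compl]
    have hnonneg : ∀ i ∈ (univ : Finset (Fin n)), 0 ≤ f i := by
      intro i _
      rcases hv01 i with h | h <;> by_cases hi : i ∈ S <;> simp [hf, hi, h]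
    have hne : (univ.filter fun i => v i = 1) ≠ S := by
      intro h
      rw [hcard, h] at hvodd
      exact (Nat.not_even_iff_odd.mpr hvodd) hS
    obtain ⟨i₀, hi₀⟩ : ∃ i, ¬(i ∈ (univ.filter fun i => v i = 1) ↔ i ∈ S) := by
      by_contra h
      push_neg at h
      exact hne (Finset.ext fun i => h i)
    have hfi₀ : (1 : ℝ) ≤ f i₀ := by
      by_cases hS₀ : i₀ ∈ S
      · have hvne : v i₀ ≠ 1 := by
          intro h
          exact hi₀ (by simp [h, hS₀])
        have hv0 : v i₀ = 0 := (hv01 i₀).resolve_right hvne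
        simp [hf, hS₀, hv0]
      · have hv1 : v i₀ = 1 := by
          by_contra h
          exact hi₀ (by simp [hS₀, h])
        simp [hf, hS₀, hv1]
    calc (1 : ℝ) ≤ f i₀ := hfi₀
      _ ≤ ∑ i, f i := Finset.single_le_sum hnonneg (mem_univ i₀)
      _ = ∑ i ∈ S, (1 - v i) + ∑ i ∈ Sᶜ, v i := hsum.symm

/-- The right-hand side is convex. -/
private lemma parity_Q_convex {n : ℕ} :
    Convex ℝ {x : Fin n → ℝ | (∀ i, 0 ≤ x i ∧ x i ≤ 1) ∧
        ∀ S : Finset (Fin n), Even S.card →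
          1 ≤ ∑ i ∈ S, (1 - x i) + ∑ i ∈ Sᶜ, x i} := by
  rintro x ⟨hx01, hxS⟩ y ⟨hy01, hyS⟩ a b ha hb hab
  have happ : ∀ i, (a • x + b • y) i = a * x i + b * y i := by
    intro i; simp [smul_eq_mul]
  refine ⟨fun i => ?_, fun S hS => ?_⟩
  · rcases hx01 i with ⟨h1, h2⟩
    rcases hy01 i with ⟨h3, h4⟩
    rw [happ]
    constructor
    · positivity
    · nlinarith
  · have hx2 := hxS S hS
    have hy2 := hyS S hS
    have e1 : ∑ i ∈ S, (1 - (a • x + b • y) i)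
        = a * ∑ i ∈ S, (1 - x i) + b * ∑ i ∈ S, (1 - y i) := by
      rw [Finset.mul_sum, Finset.mul_sum, ← Finset.sum_add_distrib]
      refine Finset.sum_congr rfl fun i _ => ?_
      rw [happ]; ring_nf; nlinarith [hab]
    have e2 : ∑ i ∈ Sᶜ, (a • x + b • y) i
        = a * ∑ i ∈ Sᶜ, x i + b * ∑ i ∈ Sᶜ, y i := by
      rw [Finset.mul_sum, Finset.mul_sum, ← Finset.sum_add_distrib]
      refine Finset.sum_congr rfl fun i _ => ?_
      rw [happ]
    rw [e1, e2]
    nlinarith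

theorem stmt19 {n : ℕ} (hn : 1 ≤ n) :
    convexHull ℝ {x : Fin n → ℝ | (∀ i, x i = 0 ∨ x i = 1) ∧ Odd ({i | x i = 1}.ncard)} =
      {x : Fin n → ℝ | (∀ i, 0 ≤ x i ∧ x i ≤ 1) ∧
        ∀ S : Finset (Fin n), Even S.card →
          1 ≤ ∑ i ∈ S, (1 - x i) + ∑ i ∈ Sᶜ, x i} := by
  classical
  set V := {x : Fin n → ℝ | (∀ i, x i = 0 ∨ x i = 1) ∧ Odd ({i | x i = 1}.ncard)} with hVdef
  apply Set.Subset.antisymm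
  · exact convexHull_min parity_V_subset_Q parity_Q_convex
  · -- hard direction, by separation
    rintro x hx
    by_contra hnot
    -- V is finite, so its convex hull is closed
    have hVfin : V.Finite := by
      have hsub : V ⊆ Set.pi Set.univ (fun _ : Fin n => ({0, 1} : Set ℝ)) := by
        rintro v ⟨hv01, -⟩ i -
        rcases hv01 i with h | h <;> simp [h]
      exact Set.Finite.subset (Set.Finite.pi fun _ => (Set.finite_singleton 1).insert 0) hsub
    have hclosed : IsClosed (convexHull ℝ V) := hVfin.isClosed_convexHull (𝕜 := ℝ)
    obtain ⟨f, u, hfu, hux⟩ :=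
      geometric_hahn_banach_closed_point (convex_convexHull ℝ V) hclosed hnot
    -- coordinates of f
    set a : Fin n → ℝ := fun i => f (fun j => if i = j then (1 : ℝ) else 0) with ha
    have hfeval : ∀ z : Fin n → ℝ, f z = ∑ i, z i * a i := by
      intro z
      conv_lhs => rw [pi_eq_sum_univ z]
      rw [map_sum]
      refine Finset.sum_congr rfl fun i _ => ?_
      rw [map_smul, smul_eq_mul, ha]
    -- indicator vectors of odd sets are in V
    set χ : Finset (Fin n) → (Fin n → ℝ) := fun s i => if i ∈ s then (1 : ℝ) else 0 with hχ
    have hχV : ∀ s : Finset (Fin n), Odd s.card → χ s ∈ V := by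
      intro s hs
      constructor
      · intro i; by_cases hi : i ∈ s <;> simp [hχ, hi]
      · have : {i | χ s i = 1} = ↑s := by
          ext i; by_cases hi : i ∈ s <;> simp [hχ, hi]
        rw [this, Set.ncard_coe_finset]
        exact hs
    have hfχ : ∀ s : Finset (Fin n), f (χ s) = ∑ i ∈ s, a i := by
      intro s
      rw [hfeval]
      have hterm : ∀ i, χ s i * a i = if i ∈ s then a i else 0 := by
        intro i; by_cases hi : i ∈ s <;> simp [hχ, hi]
      simp_rw [hterm]
      simp [Finset.sum_ite_mem]
    -- the positive-coefficient set
    set P : Finset (Fin n) := univ.filter (fun i => 0 < a i) with hP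
    have hPmem : ∀ i, i ∈ P ↔ 0 < a i := by intro i; simp [hP]
    -- key claim: there is an odd set s with f x ≤ ∑ i in s, a i
    obtain ⟨s, hsodd, hsle⟩ : ∃ s : Finset (Fin n), Odd s.card ∧ f x ≤ ∑ i ∈ s, a i := by
      have hx01 := hx.1
      by_cases hPev : Even P.card
      · -- need to flip the cheapest coordinate; uses the parity inequality for S = P
        obtain ⟨j, -, hj⟩ := Finset.exists_min_image (univ : Finset (Fin n))
          (fun i => |a i|) ⟨⟨0, hn⟩, mem_univ _⟩
        set α : ℝ := |a j| with hα
        have hα0 : 0 ≤ α := abs_nonneg _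
        have hαle : ∀ i : Fin n, α ≤ |a i| := fun i => hj i (mem_univ i)
        -- the parity inequality for S = P
        have hineq := hx.2 P hPev
        -- f x ≤ ∑_{i ∈ P} a i - α
        have hkey : f x ≤ ∑ i ∈ P, a i - α := by
          rw [hfeval]
          have hsplit : ∑ i, x i * a i = ∑ i ∈ P, x i * a i + ∑ i ∈ Pᶜ, x i * a i :=
            (Finset.sum_add_sum_compl P _).symm
          have h1 : ∀ i ∈ P, α * (1 - x i) ≤ a i * (1 - x i) := by
            intro i hi
            have hai : 0 < a i := (hPmem i).mp hi
            have : α ≤ a i := le_trans (hαle i) (le_of_eq (abs_of_pos hai))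
            have hx1 : 0 ≤ 1 - x i := by linarith [(hx01 i).2]
            nlinarith
          have h2 : ∀ i ∈ Pᶜ, α * x i ≤ -(x i * a i) := by
            intro i hi
            have hiP : i ∉ P := by simpa using hi
            have hai : a i ≤ 0 := by
              by_contra h
              exact hiP ((hPmem i).mpr (lt_of_not_ge h))
            have : α ≤ -a i := le_trans (hαle i) (le_of_eq (abs_of_nonpos hai))
            have hx0 : 0 ≤ x i := (hx01 i).1
            nlinarith
          have hsum1 : α * ∑ i ∈ P, (1 - x i) ≤ ∑ i ∈ P, a i * (1 - x i) := by
            rw [Finset.mul_sum]; exact Finset.sum_le_sum h1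
          have hsum2 : α * ∑ i ∈ Pᶜ, x i ≤ ∑ i ∈ Pᶜ, -(x i * a i) := by
            rw [Finset.mul_sum]; exact Finset.sum_le_sum h2
          have hexp1 : ∑ i ∈ P, a i * (1 - x i) = ∑ i ∈ P, a i - ∑ i ∈ P, x i * a i := by
            rw [← Finset.sum_sub_distrib]
            exact Finset.sum_congr rfl fun i _ => by ring
          have hexp2 : ∑ i ∈ Pᶜ, -(x i * a i) = -∑ i ∈ Pᶜ, x i * a i := by
            rw [Finset.sum_neg_distrib]
          have hmul : α * 1 ≤ α * (∑ i ∈ P, (1 - x i) + ∑ i ∈ Pᶜ, x i) :=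
            mul_le_mul_of_nonneg_left hineq hα0
          rw [mul_comm] at hmul
          have := hsum1
          rw [hexp1] at hsum1
          rw [hexp2] at hsum2
          rw [hsplit]
          nlinarith [hsum1, hsum2, hmul]
        -- build the odd set
        by_cases hjP : j ∈ P
        · refine ⟨P.erase j, ?_, ?_⟩
          · rw [Finset.card_erase_of_mem hjP]
            rcases hPev with ⟨k, hk⟩
            have hk1 : 1 ≤ P.card := Finset.card_pos.mpr ⟨j, hjP⟩
            refine ⟨k - 1, ?_⟩
            omega
          · have haj : a j = α := (abs_of_pos ((hPmem j).mp hjP)).symm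
            have : ∑ i ∈ P.erase j, a i = ∑ i ∈ P, a i - a j :=
              (Finset.sum_erase_eq_sub hjP)
            rw [this, haj]
            exact hkey
        · refine ⟨insert j P, ?_, ?_⟩
          · rw [Finset.card_insert_of_notMem hjP]
            exact Even.add_one hPev
          · have haj : a j = -α := by
              have hai : a j ≤ 0 := by
                by_contra h
                exact hjP ((hPmem j).mpr (lt_of_not_ge h))
              rw [hα, abs_of_nonpos hai]; ring
            rw [Finset.sum_insert hjP, haj]
            linarith [hkey]
      · -- P itself is odd
        refine ⟨P, Nat.not_even_iff_odd.mp hPev, ?_⟩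
        rw [hfeval]
        have hsplit : ∑ i, x i * a i = ∑ i ∈ P, x i * a i + ∑ i ∈ Pᶜ, x i * a i :=
          (Finset.sum_add_sum_compl P _).symm
        have h1 : ∑ i ∈ P, x i * a i ≤ ∑ i ∈ P, a i := by
          refine Finset.sum_le_sum fun i hi => ?_
          have hai : 0 < a i := (hPmem i).mp hi
          nlinarith [(hx.1 i).2, (hx.1 i).1]
        have h2 : ∑ i ∈ Pᶜ, x i * a i ≤ 0 := by
          refine Finset.sum_nonpos fun i hi => ?_
          have hiP : i ∉ P := by simpa using hi
          have hai : a i ≤ 0 := by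
            by_contra h
            exact hiP ((hPmem i).mpr (lt_of_not_ge h))
          have hx0 : 0 ≤ x i := (hx.1 i).1
          exact mul_nonpos_of_nonneg_of_nonpos hx0 hai
        rw [hsplit]
        linarith
    -- contradiction
    have h1 : f (χ s) < u := hfu (χ s) (subset_convexHull ℝ V (hχV s hsodd))
    rw [hfχ s] at h1
    linarith
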